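/- Suppose nonnegative continuous functions d_n on [0,T] satisfy d_{n+1}'(t) ≤ (−2L_0 + L) d_{n+1}(t) + L sup_{0≤s≤T} d_n(s), with d_{n+1}(0) = 0. Then sup_t d_{n+1}(t) ≤ (L/(2L_0 − L)) sup_t d_n(t) (if 2L_0 > L), so if additionally L/(2L_0 − L) < 1, the sequence sup_t d_n(t) converges to 0 geometrically; in particular d_n(t) = E|X_n(t) − X_{n+1}(t)|^2 shows the iterates X_n form a Cauchy sequence in sup-mean-square, yielding uniqueness of the equilibrium distribution curve in the strongly dissipative semi-linear case. -/

import Mathlib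

open Set

/-- Contraction estimate for the successive-approximation differences in the strongly
dissipative semi-linear case: if nonnegative continuous `d_n` satisfy
`d_{n+1}' ≤ (−2L₀ + L) d_{n+1} + L sup d_n` with `d_{n+1}(0) = 0` and `2L₀ > L`, then
`sup d_{n+1} ≤ (L/(2L₀−L)) sup d_n`; hence `sup d_n ≤ (L/(2L₀−L))ⁿ sup d_0`, and if
moreover `L/(2L₀−L) < 1` the suprema converge (geometrically) to `0`, so the iterates form
a Cauchy sequence in sup-mean-square, yielding uniqueness of the equilibrium curve. -/
theorem stmt15 (T L L₀ : ℝ) (hT : 0 < T) (hL : 0 < L) (h2L : L < 2 * L₀)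
    (dn : ℕ → ℝ → ℝ)
    (hnn : ∀ n t, t ∈ Icc (0:ℝ) T → 0 ≤ dn n t)
    (hcont : ∀ n, ContinuousOn (dn n) (Icc 0 T))
    (hdiff : ∀ n t, t ∈ Icc (0:ℝ) T → DifferentiableAt ℝ (dn (n + 1)) t)
    (hrec : ∀ n, ∀ t ∈ Icc (0:ℝ) T,
      deriv (dn (n + 1)) t
        ≤ (-2 * L₀ + L) * dn (n + 1) t + L * ⨆ s ∈ Icc (0:ℝ) T, dn n s)
    (h0 : ∀ n, dn (n + 1) 0 = 0) :
    (∀ n, (⨆ t ∈ Icc (0:ℝ) T, dn (n + 1) t)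
        ≤ (L / (2 * L₀ - L)) * ⨆ t ∈ Icc (0:ℝ) T, dn n t) ∧
    (∀ n, (⨆ t ∈ Icc (0:ℝ) T, dn n t)
        ≤ (L / (2 * L₀ - L)) ^ n * ⨆ t ∈ Icc (0:ℝ) T, dn 0 t) ∧
    (L / (2 * L₀ - L) < 1 →
      Filter.Tendsto (fun n => ⨆ t ∈ Icc (0:ℝ) T, dn n t) Filter.atTop (nhds 0)) := by
  set c : ℝ := 2 * L₀ - L with hc_def
  have hc : 0 < c := by simp [hc_def]; linarith
  set S : ℕ → ℝ := fun n => ⨆ t ∈ Icc (0:ℝ) T, dn n t with hS_def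
  -- the biSup function is bounded above
  have hbdd : ∀ n, BddAbove (Set.range fun t => ⨆ _ : t ∈ Icc (0:ℝ) T, dn n t) := by
    intro n
    obtain ⟨C, hC⟩ := (isCompact_Icc.image_of_continuousOn (hcont n)).bddAbove
    refine ⟨max C 0, ?_⟩
    rintro x ⟨t, rfl⟩
    dsimp only
    by_cases ht : t ∈ Icc (0:ℝ) T
    · rw [ciSup_pos ht]
      exact le_trans (hC ⟨t, ht, rfl⟩) (le_max_left _ _)
    · exact Real.iSup_le (fun h => absurd h ht) (le_max_right _ _)
  have hle_S : ∀ n, ∀ t ∈ Icc (0:ℝ) T, dn n t ≤ S n := by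
    intro n t ht
    have := le_ciSup (hbdd n) t
    rwa [ciSup_pos ht] at this
  have hS_nonneg : ∀ n, 0 ≤ S n := by
    intro n
    have h0T : (0:ℝ) ∈ Icc (0:ℝ) T := ⟨le_refl _, hT.le⟩
    exact le_trans (hnn n 0 h0T) (hle_S n 0 h0T)
  -- key pointwise bound
  have key : ∀ n, ∀ t ∈ Icc (0:ℝ) T, dn (n + 1) t ≤ L * S n / c := by
    intro n t ht
    set K : ℝ := L * S n / c with hK_def
    have hK0 : 0 ≤ K := div_nonneg (mul_nonneg hL.le (hS_nonneg n)) hc.le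
    set h : ℝ → ℝ := fun x => Real.exp (c * x) * (dn (n + 1) x - K) with hh_def
    have hanti : AntitoneOn h (Icc (0:ℝ) T) := by
      apply antitoneOn_of_deriv_nonpos (convex_Icc 0 T)
      · exact ((Real.continuous_exp.comp (continuous_const.mul continuous_id)).continuousOn).mul
          ((hcont (n + 1)).sub continuousOn_const)
      · intro x hx
        rw [interior_Icc] at hx
        have hx' : x ∈ Icc (0:ℝ) T := Ioo_subset_Icc_self hx
        exact (((Real.differentiable_exp.comp
          ((differentiable_const c).mul differentiable_id)).differentiableAt).mul
          ((hdiff n x hx').sub_const K)).differentiableWithinAt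
      · intro x hx
        rw [interior_Icc] at hx
        have hx' : x ∈ Icc (0:ℝ) T := Ioo_subset_Icc_self hx
        have hd : HasDerivAt (dn (n + 1)) (deriv (dn (n + 1)) x) x :=
          (hdiff n x hx').hasDerivAt
        have he : HasDerivAt (fun y => Real.exp (c * y)) (Real.exp (c * x) * c) x := by
          simpa using ((hasDerivAt_id x).const_mul c).exp
        have hder : HasDerivAt h
            (Real.exp (c * x) * c * (dn (n + 1) x - K)
              + Real.exp (c * x) * deriv (dn (n + 1)) x) x := by
          exact he.mul (hd.sub_const K)
        rw [hder.deriv]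
        have hrec' := hrec n x hx'
        have hcK : c * K = L * S n := by
          rw [hK_def]; field_simp
        have hstep : c * (dn (n + 1) x - K) + deriv (dn (n + 1)) x ≤ 0 := by
          have : deriv (dn (n + 1)) x ≤ -c * dn (n + 1) x + c * K := by
            rw [hcK]
            calc deriv (dn (n + 1)) x
                ≤ (-2 * L₀ + L) * dn (n + 1) x + L * S n := hrec'
              _ = -c * dn (n + 1) x + L * S n := by rw [hc_def]; ring
          nlinarith
        have hexp : 0 < Real.exp (c * x) := Real.exp_pos _
        have hmul : 0 ≤ Real.exp (c * x) *
            -(c * (dn (n + 1) x - K) + deriv (dn (n + 1)) x) :=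
          mul_nonneg hexp.le (by linarith)
        nlinarith [hmul]
    have h0T : (0:ℝ) ∈ Icc (0:ℝ) T := ⟨le_refl _, hT.le⟩
    have := hanti h0T ht ht.1
    have hh0 : h 0 = -K := by simp [hh_def, h0 n]
    rw [hh0] at this
    have hexp : 0 < Real.exp (c * t) := Real.exp_pos _
    have h2 : Real.exp (c * t) * (dn (n + 1) t - K) ≤ -K := this
    by_contra hcon
    push_neg at hcon
    have hpos : 0 < Real.exp (c * t) * (dn (n + 1) t - K) :=
      mul_pos hexp (by linarith)
    linarith
  have part1 : ∀ n, S (n + 1) ≤ (L / c) * S n := by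
    intro n
    have hKn : 0 ≤ L * S n / c := div_nonneg (mul_nonneg hL.le (hS_nonneg n)) hc.le
    have : S (n + 1) ≤ L * S n / c := by
      apply Real.iSup_le _ hKn
      intro t
      apply Real.iSup_le _ hKn
      intro ht
      exact key n t ht
    calc S (n + 1) ≤ L * S n / c := this
      _ = (L / c) * S n := by ring
  have part2 : ∀ n, S n ≤ (L / c) ^ n * S 0 := by
    intro n
    induction n with
    | zero => simp
    | succ m ih =>
      calc S (m + 1) ≤ (L / c) * S m := part1 m
        _ ≤ (L / c) * ((L / c) ^ m * S 0) := by
            apply mul_le_mul_of_nonneg_left ih (div_nonneg hL.le hc.le)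
        _ = (L / c) ^ (m + 1) * S 0 := by ring
  refine ⟨part1, part2, ?_⟩
  intro hr
  have hr0 : 0 ≤ L / c := div_nonneg hL.le hc.le
  have htend : Filter.Tendsto (fun n => (L / c) ^ n * S 0) Filter.atTop (nhds 0) := by
    have := (tendsto_pow_atTop_nhds_zero_of_lt_one hr0 hr).mul_const (S 0)
    simpa using this
  exact squeeze_zero hS_nonneg part2 htend
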